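/- Let (v_i)_{i≥1} be nonnegative real numbers with ∑_{i≥1} v_i = 1, let (x_i)_{i≥1} and (y_i)_{i≥1} be injective sequences in [0,1], and let (μ_i)_{i≥1} be Borel probability measures on [0,1]² each having uniform marginals (i.e., the pushforward of μ_i under each coordinate projection is Lebesgue measure on [0,1]). For each i define the affine map A_i : [0,1]² → [0,1]², A_i(s,t) = ( ∑_{j : x_j < x_i} v_j + v_i s , ∑_{j : y_j < y_i} v_j + v_i t ). Then the measure μ = ∑_{i≥1} v_i · (A_i)_* μ_i is a Borel probability measure on [0,1]² with uniform marginals, i.e., μ([0,1] × [a,b]) = μ([a,b] × [0,1]) = b − a for all 0 ≤ a ≤ b ≤ 1. -/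

import Mathlib

open MeasureTheory
open scoped Classical ENNReal

lemma pd_summable_of_tsum_one {v : ℕ → ℝ} (hv : ∀ i, 0 ≤ v i) (hsum : ∑' i, v i = 1) :
    Summable v := by
  by_contra h
  rw [tsum_eq_zero_of_not_summable h] at hsum
  norm_num at hsum

lemma pd_summable_ite {v : ℕ → ℝ} (hv : ∀ i, 0 ≤ v i) (hvs : Summable v) (P : ℕ → Prop) [DecidablePred P] :
    Summable fun j => if P j then v j else 0 :=
  Summable.of_nonneg_of_le (fun j => by split <;> simp [hv j])
    (fun j => by split <;> simp [hv j]) hvs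

lemma pd_tsum_ite_nonneg {v : ℕ → ℝ} (hv : ∀ i, 0 ≤ v i) (P : ℕ → Prop) [DecidablePred P] :
    0 ≤ ∑' j, if P j then v j else 0 :=
  tsum_nonneg fun j => by split <;> simp [hv j]

lemma pd_step {v : ℕ → ℝ} (hv : ∀ i, 0 ≤ v i) (hvs : Summable v) (P : ℕ → Prop) [DecidablePred P] (i : ℕ)
    (g : ℕ → ℝ)
    (hg : ∀ j, (if P j then v j else 0) + (if j = i then v j else 0) ≤ g j)
    (hgs : Summable g) :
    (∑' j, if P j then v j else 0) + v i ≤ ∑' j, g j := by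
  have h2 : (∑' j, if j = i then v j else 0) = v i := by
    rw [tsum_eq_single i fun j hj => if_neg hj]; simp
  have h1 : (∑' j, if P j then v j else 0) + v i
      = ∑' j, ((if P j then v j else 0) + (if j = i then v j else 0)) := by
    rw [Summable.tsum_add (pd_summable_ite hv hvs P) (pd_summable_ite hv hvs (fun j => j = i)), h2]
  rw [h1]
  exact Summable.tsum_le_tsum hg
    ((pd_summable_ite hv hvs P).add (pd_summable_ite hv hvs (fun j => j = i))) hgs

lemma pd_d_mono {v : ℕ → ℝ} (hv : ∀ i, 0 ≤ v i) (hvs : Summable v)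
    {y : ℕ → ℝ} {i k : ℕ} (hik : y i < y k) :
    (∑' j, if y j < y i then v j else 0) + v i ≤ ∑' j, if y j < y k then v j else 0 := by
  apply pd_step hv hvs _ i _ ?_ (pd_summable_ite hv hvs _)
  intro j
  by_cases hj : j = i
  · subst hj; simp [lt_irrefl, if_pos hik]
  · simp only [if_neg hj, add_zero]
    by_cases h2 : y j < y i
    · rw [if_pos h2, if_pos (h2.trans hik)]
    · rw [if_neg h2]; split <;> simp [hv j]

lemma pd_d_add_le_one {v : ℕ → ℝ} (hv : ∀ i, 0 ≤ v i) (hvs : Summable v)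
    (hsum : ∑' i, v i = 1) {y : ℕ → ℝ} (i : ℕ) :
    (∑' j, if y j < y i then v j else 0) + v i ≤ 1 := by
  rw [← hsum]
  apply pd_step hv hvs _ i v ?_ hvs
  intro j
  by_cases hj : j = i
  · subst hj; simp [lt_irrefl]
  · simp only [if_neg hj, add_zero]; split <;> simp [hv j]

lemma pd_tiling (v : ℕ → ℝ) (hv : ∀ i, 0 ≤ v i) (hsum : ∑' i, v i = 1)
    (y : ℕ → ℝ) (hyinj : Function.Injective y) {a b : ℝ}
    (ha : 0 ≤ a) (hab : a ≤ b) (hb : b ≤ 1) :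
    ∑' i, volume (Set.Icc (∑' j, if y j < y i then v j else 0)
        ((∑' j, if y j < y i then v j else 0) + v i) ∩ Set.Icc a b)
      = ENNReal.ofReal (b - a) := by
  have hvs := pd_summable_of_tsum_one hv hsum
  set d : ℕ → ℝ := fun i => ∑' j, if y j < y i then v j else 0 with hd
  set J : ℕ → Set ℝ := fun i => Set.Icc (d i) (d i + v i) with hJ
  have key : ∀ i k, y i < y k → volume (J i ∩ J k) = 0 := by
    intro i k hik
    have h1 : d i + v i ≤ d k := pd_d_mono hv hvs hik
    have hsub : J i ∩ J k ⊆ {d k} := by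
      rintro t ⟨⟨_, ht1⟩, ht2, _⟩
      exact le_antisymm (ht1.trans h1) ht2
    exact measure_mono_null hsub Real.volume_singleton
  have hdisjJ : Pairwise (Function.onFun (MeasureTheory.AEDisjoint volume) J) := by
    intro i k hik
    rcases lt_trichotomy (y i) (y k) with h | h | h
    · exact key i k h
    · exact absurd (hyinj h) hik
    · show volume (J i ∩ J k) = 0
      rw [Set.inter_comm]; exact key k i h
  have hdisjI : Pairwise (Function.onFun (MeasureTheory.AEDisjoint volume) fun i => J i ∩ Set.Icc a b) := by
    intro i k hik
    show volume ((J i ∩ Set.Icc a b) ∩ (J k ∩ Set.Icc a b)) = 0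
    refine measure_mono_null ?_ (hdisjJ hik)
    intro t ht
    exact ⟨ht.1.1, ht.2.1⟩
  rw [← measure_iUnion₀ hdisjI
    (fun i => (measurableSet_Icc.inter measurableSet_Icc).nullMeasurableSet)]
  rw [← Set.iUnion_inter]
  have hUvol : volume (⋃ i, J i) = 1 := by
    rw [measure_iUnion₀ hdisjJ (fun i => measurableSet_Icc.nullMeasurableSet)]
    have hJv : ∀ i, volume (J i) = ENNReal.ofReal (v i) := by
      intro i; rw [hJ]; simp [Real.volume_Icc]
    rw [tsum_congr hJv, ← ENNReal.ofReal_tsum_of_nonneg hv hvs, hsum, ENNReal.ofReal_one]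
  have hUsub : (⋃ i, J i) ⊆ Set.Icc (0:ℝ) 1 :=
    Set.iUnion_subset fun i => Set.Icc_subset_Icc (pd_tsum_ite_nonneg hv _)
      (pd_d_add_le_one hv hvs hsum i)
  have hnull : volume (Set.Icc (0:ℝ) 1 \ ⋃ i, J i) = 0 := by
    have hm : MeasurableSet (⋃ i, J i) := MeasurableSet.iUnion fun i => measurableSet_Icc
    rw [measure_diff hUsub hm.nullMeasurableSet (by rw [hUvol]; exact ENNReal.one_ne_top),
      hUvol, Real.volume_Icc]
    simp
  have h0 : volume (Set.Icc a b \ ⋃ i, J i) = 0 :=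
    measure_mono_null (Set.diff_subset_diff_left (Set.Icc_subset_Icc ha hb)) hnull
  have hfin : volume ((⋃ i, J i) ∩ Set.Icc a b) = volume (Set.Icc a b) := by
    apply le_antisymm (measure_mono Set.inter_subset_right)
    calc volume (Set.Icc a b)
        ≤ volume (Set.Icc a b ∩ ⋃ i, J i) + volume (Set.Icc a b \ ⋃ i, J i) :=
          measure_le_inter_add_diff _ _ _
      _ = volume ((⋃ i, J i) ∩ Set.Icc a b) := by rw [h0, add_zero, Set.inter_comm]
  rw [hfin, Real.volume_Icc]

lemma pd_comp (μ : Measure (ℝ × ℝ)) [IsProbabilityMeasure μ]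
    (hfst : μ.map Prod.fst = volume.restrict (Set.Icc (0:ℝ) 1))
    (hsnd : μ.map Prod.snd = volume.restrict (Set.Icc (0:ℝ) 1))
    (c d w : ℝ) (hw : 0 ≤ w) (hc : 0 ≤ c) (hcw : c + w ≤ 1) (a b : ℝ) :
    ENNReal.ofReal w *
      μ {p : ℝ × ℝ | c + w * p.1 ∈ Set.Icc (0:ℝ) 1 ∧ d + w * p.2 ∈ Set.Icc a b}
      = volume (Set.Icc d (d + w) ∩ Set.Icc a b) := by
  rcases eq_or_lt_of_le hw with h0 | hw'
  · rw [← h0]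
    simp only [ENNReal.ofReal_zero, zero_mul, add_zero, Set.Icc_self]
    exact (measure_mono_null Set.inter_subset_left Real.volume_singleton).symm
  · have hw0 : w ≠ 0 := ne_of_gt hw'
    have hcon : μ {p : ℝ × ℝ | p.1 ∉ Set.Icc (0:ℝ) 1} = 0 := by
      have he : {p : ℝ × ℝ | p.1 ∉ Set.Icc (0:ℝ) 1} = Prod.fst ⁻¹' (Set.Icc (0:ℝ) 1)ᶜ := rfl
      rw [he, ← Measure.map_apply measurable_fst measurableSet_Icc.compl, hfst,
        Measure.restrict_apply measurableSet_Icc.compl, Set.compl_inter_self, measure_empty]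
    set T : Set (ℝ × ℝ) := {p | d + w * p.2 ∈ Set.Icc a b} with hTdef
    have hST : μ {p : ℝ × ℝ | c + w * p.1 ∈ Set.Icc (0:ℝ) 1 ∧ d + w * p.2 ∈ Set.Icc a b}
        = μ T := by
      apply le_antisymm (measure_mono fun p hp => hp.2)
      calc μ T ≤ μ ({p : ℝ × ℝ | c + w * p.1 ∈ Set.Icc (0:ℝ) 1 ∧ d + w * p.2 ∈ Set.Icc a b}
            ∪ {p : ℝ × ℝ | p.1 ∉ Set.Icc (0:ℝ) 1}) := by
            apply measure_mono
            intro p hp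
            by_cases h : p.1 ∈ Set.Icc (0:ℝ) 1
            · obtain ⟨h1, h2⟩ := Set.mem_Icc.mp h
              left
              refine ⟨Set.mem_Icc.mpr ⟨?_, ?_⟩, hp⟩
              · nlinarith [mul_nonneg hw h1]
              · nlinarith [mul_le_mul_of_nonneg_left h2 hw]
            · right; exact h
        _ ≤ μ {p : ℝ × ℝ | c + w * p.1 ∈ Set.Icc (0:ℝ) 1 ∧ d + w * p.2 ∈ Set.Icc a b}
            + μ {p : ℝ × ℝ | p.1 ∉ Set.Icc (0:ℝ) 1} := measure_union_le _ _
        _ = μ {p : ℝ × ℝ | c + w * p.1 ∈ Set.Icc (0:ℝ) 1 ∧ d + w * p.2 ∈ Set.Icc a b} := by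
            rw [hcon, add_zero]
    have hT : T = Prod.snd ⁻¹' Set.Icc ((a - d)/w) ((b - d)/w) := by
      ext p
      simp only [hTdef, Set.mem_setOf_eq, Set.mem_preimage, Set.mem_Icc]
      rw [div_le_iff₀ hw', le_div_iff₀ hw']
      constructor <;> rintro ⟨h1, h2⟩ <;> constructor <;> linarith [mul_comm w p.2]
    have hμT : μ T = ENNReal.ofReal (min ((b - d)/w) 1 - max ((a - d)/w) 0) := by
      rw [hT, ← Measure.map_apply measurable_snd measurableSet_Icc, hsnd,
        Measure.restrict_apply measurableSet_Icc, Set.Icc_inter_Icc, Real.volume_Icc]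
    rw [hST, hμT, Set.Icc_inter_Icc, Real.volume_Icc,
      ← ENNReal.ofReal_mul hw]
    congr 1
    have e1 : w * ((b - d)/w) = b - d := by field_simp
    have e2 : w * ((a - d)/w) = a - d := by field_simp
    rcases le_total ((b - d)/w) 1 with h1 | h1 <;> rcases le_total ((a - d)/w) 0 with h2 | h2
    · have hb' : b ≤ d + w := by have := (div_le_one hw').mp h1; linarith
      have ha' : a ≤ d := by have := mul_nonpos_of_nonneg_of_nonpos hw h2; linarith [e2]
      rw [min_eq_left h1, max_eq_right h2, min_eq_right hb', max_eq_left ha']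
      linear_combination e1
    · have hb' : b ≤ d + w := by have := (div_le_one hw').mp h1; linarith
      have ha' : d ≤ a := by have := mul_nonneg hw h2; linarith [e2]
      rw [min_eq_left h1, max_eq_left h2, min_eq_right hb', max_eq_right ha']
      linear_combination e1 - e2
    · have hb' : d + w ≤ b := by have := (one_le_div hw').mp h1; linarith
      have ha' : a ≤ d := by have := mul_nonpos_of_nonneg_of_nonpos hw h2; linarith [e2]
      rw [min_eq_right h1, max_eq_right h2, min_eq_left hb', max_eq_left ha']
      ring
    · have hb' : d + w ≤ b := by have := (one_le_div hw').mp h1; linarith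
      have ha' : d ≤ a := by have := mul_nonneg hw h2; linarith [e2]
      rw [min_eq_right h1, max_eq_left h2, min_eq_left hb', max_eq_right ha']
      linear_combination -e2

/-- The Poisson–Dirichlet permuton construction yields a permuton: if `(v i)` are
nonnegative masses summing to `1`, `(x i)` and `(y i)` are injective sequences in `[0,1]`,
and each `μ i` is a probability measure on `[0,1]²` with uniform marginals, then the measure
`ν = ∑ i, v_i · (A_i)_* μ_i`, where
`A_i(s,t) = (∑_{j : x_j < x_i} v_j + v_i s, ∑_{j : y_j < y_i} v_j + v_i t)`,
is a probability measure with uniform marginals: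
`ν([0,1] × [a,b]) = ν([a,b] × [0,1]) = b − a` for all `0 ≤ a ≤ b ≤ 1`. -/
theorem stmt_14 (v : ℕ → ℝ) (hv : ∀ i, 0 ≤ v i) (hsum : ∑' i, v i = 1)
    (x y : ℕ → ℝ) (hxinj : Function.Injective x) (hyinj : Function.Injective y)
    (hx : ∀ i, x i ∈ Set.Icc (0 : ℝ) 1) (hy : ∀ i, y i ∈ Set.Icc (0 : ℝ) 1)
    (μ : ℕ → Measure (ℝ × ℝ)) (hμ : ∀ i, IsProbabilityMeasure (μ i))
    (hfst : ∀ i, (μ i).map Prod.fst = volume.restrict (Set.Icc (0 : ℝ) 1))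
    (hsnd : ∀ i, (μ i).map Prod.snd = volume.restrict (Set.Icc (0 : ℝ) 1))
    (A : ℕ → ℝ × ℝ → ℝ × ℝ)
    (hA : ∀ i p, A i p =
      ((∑' j : ℕ, if x j < x i then v j else 0) + v i * p.1,
       (∑' j : ℕ, if y j < y i then v j else 0) + v i * p.2))
    (ν : Measure (ℝ × ℝ))
    (hν : ν = Measure.sum fun i => ENNReal.ofReal (v i) • (μ i).map (A i)) :
    IsProbabilityMeasure ν ∧
    ∀ a b : ℝ, 0 ≤ a → a ≤ b → b ≤ 1 →
      ν (Set.Icc (0 : ℝ) 1 ×ˢ Set.Icc a b) = ENNReal.ofReal (b - a) ∧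
      ν (Set.Icc a b ×ˢ Set.Icc (0 : ℝ) 1) = ENNReal.ofReal (b - a) := by
  have hvs : Summable v := pd_summable_of_tsum_one hv hsum
  have hAm : ∀ i, Measurable (A i) := by
    intro i
    have hAe : A i = fun p : ℝ × ℝ =>
        ((∑' j : ℕ, if x j < x i then v j else 0) + v i * p.1,
         (∑' j : ℕ, if y j < y i then v j else 0) + v i * p.2) := funext (hA i)
    rw [hAe]
    exact (measurable_const.add (measurable_fst.const_mul _)).prodMk
      (measurable_const.add (measurable_snd.const_mul _))
  have hprob : IsProbabilityMeasure ν := by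
    constructor
    rw [hν, Measure.sum_apply _ MeasurableSet.univ]
    have huniv : ∀ i, (ENNReal.ofReal (v i) • (μ i).map (A i)) Set.univ
        = ENNReal.ofReal (v i) := by
      intro i
      haveI := hμ i
      rw [Measure.smul_apply, Measure.map_apply (hAm i) MeasurableSet.univ,
        Set.preimage_univ, measure_univ, smul_eq_mul, mul_one]
    rw [tsum_congr huniv, ← ENNReal.ofReal_tsum_of_nonneg hv hvs, hsum, ENNReal.ofReal_one]
  refine ⟨hprob, ?_⟩
  intro a b ha hab hb
  have hc0 : ∀ i, 0 ≤ ∑' j : ℕ, if x j < x i then v j else 0 :=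
    fun i => pd_tsum_ite_nonneg hv _
  have hc1 : ∀ i, (∑' j : ℕ, if x j < x i then v j else 0) + v i ≤ 1 :=
    fun i => pd_d_add_le_one hv hvs hsum i
  have hd0 : ∀ i, 0 ≤ ∑' j : ℕ, if y j < y i then v j else 0 :=
    fun i => pd_tsum_ite_nonneg hv _
  have hd1 : ∀ i, (∑' j : ℕ, if y j < y i then v j else 0) + v i ≤ 1 :=
    fun i => pd_d_add_le_one hv hvs hsum i
  constructor
  · have hSm : MeasurableSet (Set.Icc (0:ℝ) 1 ×ˢ Set.Icc a b) :=
      measurableSet_Icc.prod measurableSet_Icc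
    rw [hν, Measure.sum_apply _ hSm]
    have hterm : ∀ i, (ENNReal.ofReal (v i) • (μ i).map (A i)) (Set.Icc (0:ℝ) 1 ×ˢ Set.Icc a b)
        = volume (Set.Icc (∑' j : ℕ, if y j < y i then v j else 0)
            ((∑' j : ℕ, if y j < y i then v j else 0) + v i) ∩ Set.Icc a b) := by
      intro i
      haveI := hμ i
      have hpre : A i ⁻¹' (Set.Icc (0:ℝ) 1 ×ˢ Set.Icc a b)
          = {p : ℝ × ℝ | (∑' j : ℕ, if x j < x i then v j else 0) + v i * p.1 ∈ Set.Icc (0:ℝ) 1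
              ∧ (∑' j : ℕ, if y j < y i then v j else 0) + v i * p.2 ∈ Set.Icc a b} := by
        ext p
        rw [Set.mem_preimage, hA i p]
        simp only [Set.mem_prod, Set.mem_setOf_eq, Set.mem_Icc]
      rw [Measure.smul_apply, Measure.map_apply (hAm i) hSm, smul_eq_mul, hpre]
      exact pd_comp (μ i) (hfst i) (hsnd i) _ _ _ (hv i) (hc0 i) (hc1 i) a b
    rw [tsum_congr hterm]
    exact pd_tiling v hv hsum y hyinj ha hab hb
  · have hSm : MeasurableSet (Set.Icc a b ×ˢ Set.Icc (0:ℝ) 1) :=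
      measurableSet_Icc.prod measurableSet_Icc
    rw [hν, Measure.sum_apply _ hSm]
    have hterm : ∀ i, (ENNReal.ofReal (v i) • (μ i).map (A i)) (Set.Icc a b ×ˢ Set.Icc (0:ℝ) 1)
        = volume (Set.Icc (∑' j : ℕ, if x j < x i then v j else 0)
            ((∑' j : ℕ, if x j < x i then v j else 0) + v i) ∩ Set.Icc a b) := by
      intro i
      haveI := hμ i
      set μ' := (μ i).map Prod.swap with hμ'
      haveI : IsProbabilityMeasure μ' := Measure.isProbabilityMeasure_map measurable_swap.aemeasurable
      have hfst' : μ'.map Prod.fst = volume.restrict (Set.Icc (0:ℝ) 1) := by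
        rw [hμ', Measure.map_map measurable_fst measurable_swap]
        exact hsnd i
      have hsnd' : μ'.map Prod.snd = volume.restrict (Set.Icc (0:ℝ) 1) := by
        rw [hμ', Measure.map_map measurable_snd measurable_swap]
        exact hfst i
      have key := pd_comp μ' hfst' hsnd'
        (∑' j : ℕ, if y j < y i then v j else 0) (∑' j : ℕ, if x j < x i then v j else 0)
        (v i) (hv i) (hd0 i) (hd1 i) a b
      have hmsw : MeasurableSet {p : ℝ × ℝ |
          (∑' j : ℕ, if y j < y i then v j else 0) + v i * p.1 ∈ Set.Icc (0:ℝ) 1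
          ∧ (∑' j : ℕ, if x j < x i then v j else 0) + v i * p.2 ∈ Set.Icc a b} := by
        exact ((measurable_const.add (measurable_fst.const_mul _)) measurableSet_Icc).inter
          ((measurable_const.add (measurable_snd.const_mul _)) measurableSet_Icc)
      rw [hμ', Measure.map_apply measurable_swap hmsw] at key
      have hpre : A i ⁻¹' (Set.Icc a b ×ˢ Set.Icc (0:ℝ) 1)
          = Prod.swap ⁻¹' {p : ℝ × ℝ |
            (∑' j : ℕ, if y j < y i then v j else 0) + v i * p.1 ∈ Set.Icc (0:ℝ) 1
            ∧ (∑' j : ℕ, if x j < x i then v j else 0) + v i * p.2 ∈ Set.Icc a b} := by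
        ext p
        rw [Set.mem_preimage, Set.mem_preimage, hA i p]
        simp only [Set.mem_prod, Set.mem_setOf_eq, Prod.fst_swap, Prod.snd_swap]
        tauto
      rw [Measure.smul_apply, Measure.map_apply (hAm i) hSm, smul_eq_mul, hpre]
      exact key
    rw [tsum_congr hterm]
    exact pd_tiling v hv hsum x hxinj ha hab hb
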